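/- In the quaternion algebra (7, -1)/ℚ, the lattice O = ℤ·1 + ℤ·(1/2 + i/2 + j/2 + k/2) + ℤ·j + ℤ·k is a ring (an order), and its reduced discriminant is 14. -/

import Mathlib

open scoped Quaternion

/-- The ℤ-lattice O = ℤ·1 + ℤ·(1/2 + i/2 + j/2 + k/2) + ℤ·j + ℤ·k in the quaternion
algebra (7,-1)/ℚ. -/
def quatOrder71 : Set ℍ[ℚ, 7, -1] :=
  {x | ∃ a b c d : ℤ,
    x = (a : ℚ) • (1 : ℍ[ℚ, 7, -1])
      + (b : ℚ) • (⟨1/2, 1/2, 1/2, 1/2⟩ : ℍ[ℚ, 7, -1])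
      + (c : ℚ) • (⟨0, 0, 1, 0⟩ : ℍ[ℚ, 7, -1])
      + (d : ℚ) • (⟨0, 0, 0, 1⟩ : ℍ[ℚ, 7, -1])}

/-- The reduced trace. -/
def trd71 (x : ℍ[ℚ, 7, -1]) : ℚ := 2 * x.re

/-- The reduced norm. -/
def nrd71 (x : ℍ[ℚ, 7, -1]) : ℚ := (x * star x).re

/-- The basis e₁ = 1, e₂ = (1+i+j+k)/2, e₃ = j, e₄ = k of O. -/
def basis71 : Fin 4 → ℍ[ℚ, 7, -1]
  | 0 => 1
  | 1 => ⟨1/2, 1/2, 1/2, 1/2⟩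
  | 2 => ⟨0, 0, 1, 0⟩
  | 3 => ⟨0, 0, 0, 1⟩

/-- O = ℤ·1 + ℤ·(1+i+j+k)/2 + ℤ·j + ℤ·k is an order of (7,-1)/ℚ
(a ring containing 1, with integral reduced traces and norms) whose reduced
discriminant is 14: det(trd(eᵢ·e̅ⱼ)) = 14² = 196. -/
theorem quatOrder71_is_order_of_discriminant_14 :
    (1 : ℍ[ℚ, 7, -1]) ∈ quatOrder71 ∧
    (∀ x ∈ quatOrder71, ∀ y ∈ quatOrder71, x * y ∈ quatOrder71) ∧
    (∀ x ∈ quatOrder71, ∃ n : ℤ, trd71 x = n) ∧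
    (∀ x ∈ quatOrder71, ∃ n : ℤ, nrd71 x = n) ∧
    (Matrix.of fun i j : Fin 4 => trd71 (basis71 i * star (basis71 j))).det = 196 := by
  refine ⟨⟨1, 0, 0, 0, by ext <;> simp⟩, ?_, ?_, ?_, ?_⟩
  · rintro x ⟨a, b, c, d, rfl⟩ y ⟨a', b', c', d', rfl⟩
    refine ⟨a*a' + 3*b*b' - b'*c + 3*b*d' + 4*b'*d - c*c' + 7*d*d' - c*d' + c'*d,
      a*b' + a'*b + b*b' + b*d' + b'*c + 2*c*d' - 2*c'*d - b*c' - b'*d,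
      a*c' + b*c' + 3*b*d' + a'*c - 3*b'*d - c*d' + c'*d,
      a*d' + b*c' - b'*c + a'*d + b'*d - c*d' + c'*d, ?_⟩
    ext <;>
      simp [QuaternionAlgebra.re_mul, QuaternionAlgebra.imI_mul,
        QuaternionAlgebra.imJ_mul, QuaternionAlgebra.imK_mul] <;>
      push_cast <;> ring
  · rintro x ⟨a, b, c, d, rfl⟩
    exact ⟨2*a + b, by simp [trd71]; push_cast; ring⟩
  · rintro x ⟨a, b, c, d, rfl⟩
    refine ⟨a^2 + a*b - 3*b^2 + b*c + c^2 - 7*b*d - 7*d^2, ?_⟩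
    simp [nrd71, QuaternionAlgebra.re_mul]
    push_cast; ring
  · have h : (Matrix.of fun i j : Fin 4 => trd71 (basis71 i * star (basis71 j))) =
        !![2, 1, 0, 0; 1, -6, 1, -7; 0, 1, 2, 0; 0, -7, 0, -14] := by
      ext i j
      fin_cases i <;> fin_cases j <;>
        simp [basis71, trd71, QuaternionAlgebra.re_mul, Matrix.vecHead, Matrix.vecTail] <;> norm_num
    rw [h]
    simp [Matrix.det_succ_row_zero, Fin.sum_univ_succ, Matrix.vecHead, Matrix.vecTail,
      Fin.succAbove, Matrix.cons_val_succ]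
    norm_num
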